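/- Suppose there exists a continuous 2π-periodic function f : ℝ → ℝ with f(0) = 0 such that f ∘ h₁ does not lie in the Wiener algebra A(𝕋) for any homeomorphism h₁ of the circle 𝕋 (where A(𝕋) is the space of functions on 𝕋 with absolutely convergent Fourier series, and periodic functions on ℝ are identified with functions on 𝕋). Assume furthermore the following two facts: (i) B(ℝ) is invariant under composition with nondegenerate affine self-maps of ℝ; (ii) if a function m₀ ∈ B(ℝ) vanishes outside an interval of length 2π, then its 2π-periodic extension lies in A(𝕋). Then the function f₀ : ℝ → ℝ defined by f₀ = f on [0, 2π] and f₀ = 0 outside [0, 2π] is a bounded continuous function such that f₀ ∘ h ∉ B(ℝ) for every homeomorphism h of ℝ onto itself. -/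

import Mathlib

open MeasureTheory Real Set

/-- A `2π`-periodic function on `ℝ` (i.e. a function on `𝕋 = ℝ/2πℤ`) belongs to
the Wiener algebra `A(𝕋)`: it has an absolutely convergent Fourier series. -/
def MemWienerAlgebra (g : ℝ → ℂ) : Prop :=
  Function.Periodic g (2 * π) ∧
  ∃ c : ℤ → ℂ, Summable (fun n => ‖c n‖) ∧
    ∀ t : ℝ, g t = ∑' n : ℤ, c n * Complex.exp ((n : ℂ) * t * Complex.I)

/-- Membership in `B(ℝ)`, the algebra of Fourier–Stieltjes transforms of finite
complex Borel measures on `ℝ` (a finite complex measure is encoded as `w·μ` with `μ`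
a finite positive measure and `w ∈ L¹(μ)`). -/
def MemBR (m : ℝ → ℂ) : Prop :=
  ∃ μ : Measure ℝ, IsFiniteMeasure μ ∧ ∃ w : ℝ → ℂ, Integrable w μ ∧
    ∀ ξ : ℝ, m ξ = ∫ t, Complex.exp (-(ξ * t) * Complex.I) * w t ∂μ

/-- `H : ℝ → ℝ` is a lift of a self-homeomorphism of the circle `𝕋 = ℝ/2πℤ`. -/
def IsCircleHomeoLift (H : ℝ → ℝ) : Prop :=
  Continuous H ∧
    ((StrictMono H ∧ ∀ t, H (t + 2 * π) = H t + 2 * π) ∨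
     (StrictAnti H ∧ ∀ t, H (t + 2 * π) = H t - 2 * π))

lemma circle_lift_of_monotone (G : ℝ → ℝ) (hGc : Continuous G) (hGm : StrictMono G)
    (hG0 : G 0 = 0) (hGT : G (2 * π) = 2 * π) :
    ∃ H : ℝ → ℝ, Continuous H ∧ StrictMono H ∧ (∀ t, H (t + 2 * π) = H t + 2 * π) ∧
      ∀ t ∈ Ico 0 (2 * π), H t = G t := by
  set T : ℝ := 2 * π with hTdef
  have hT : (0:ℝ) < T := by positivity
  set u : ℝ → ℝ := fun t => T * Int.fract (t / T) with hu
  have hu_mem : ∀ t, u t ∈ Ico 0 T := by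
    intro t
    simp only [hu]
    refine ⟨mul_nonneg hT.le (Int.fract_nonneg _), ?_⟩
    have := Int.fract_lt_one (t / T); nlinarith
  have hu_decomp : ∀ t, u t = t - T * (⌊t / T⌋ : ℝ) := by
    intro t
    rw [hu]
    simp only [Int.fract]
    rw [mul_sub, mul_div_cancel₀ _ hT.ne']
  set H : ℝ → ℝ := fun t => G (u t) + T * (⌊t / T⌋ : ℝ) with hH
  have hGuT : ∀ t, G (u t) < T := by
    intro t
    have := hGm (hu_mem t).2
    rwa [hGT] at this
  have hGu0 : ∀ t, 0 ≤ G (u t) := by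
    intro t
    have := hGm.monotone (hu_mem t).1
    rwa [hG0] at this
  have hHmono : StrictMono H := by
    intro s t hst
    have hks : (⌊s / T⌋ : ℤ) ≤ ⌊t / T⌋ :=
      Int.floor_le_floor ((div_le_div_iff_of_pos_right hT).2 hst.le)
    rcases eq_or_lt_of_le hks with heq | hlt
    · have hus : u s < u t := by
        rw [hu_decomp s, hu_decomp t, heq]
        linarith
      have := hGm hus
      simp only [hH, heq]
      linarith
    · have h1 : G (u s) < T := hGuT s
      have h2 : 0 ≤ G (u t) := hGu0 t
      have h3 : (⌊s / T⌋ : ℝ) + 1 ≤ (⌊t / T⌋ : ℝ) := by exact_mod_cast hlt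
      simp only [hH]
      nlinarith
  have hHper : ∀ t, H (t + T) = H t + T := by
    intro t
    have h1 : (t + T) / T = t / T + 1 := by field_simp
    simp only [hH, hu, h1, Int.fract_add_one, Int.floor_add_one]
    push_cast
    ring
  have hHeq : ∀ t ∈ Ico 0 T, H t = G t := by
    intro t ht
    have h1 : t / T ∈ Ico (0:ℝ) 1 := ⟨div_nonneg ht.1 hT.le, (div_lt_one hT).2 ht.2⟩
    have h2 : Int.fract (t / T) = t / T := Int.fract_eq_self.2 ⟨h1.1, h1.2⟩
    have h3 : ⌊t / T⌋ = 0 := Int.floor_eq_zero_iff.2 h1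
    simp only [hH, hu, h2, h3, Int.cast_zero, mul_zero, add_zero,
      mul_div_cancel₀ _ hT.ne']
  have hHsurj : Function.Surjective H := by
    intro y
    set k : ℤ := ⌊y / T⌋ with hk
    set r : ℝ := y - T * (k : ℝ) with hr
    have hy : T * (y / T) = y := mul_div_cancel₀ _ hT.ne'
    have hr0 : 0 ≤ r := by
      have h := Int.floor_le (y / T)
      rw [← hk] at h
      have := mul_le_mul_of_nonneg_left h hT.le
      rw [hr]
      linarith
    have hrT : r < T := by
      have h := Int.lt_floor_add_one (y / T)
      rw [← hk] at h
      have := mul_lt_mul_of_pos_left h hT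
      rw [hr]
      nlinarith
    have hrIcc : r ∈ Icc (G 0) (G T) := by
      rw [hG0, hGT]; exact ⟨hr0, hrT.le⟩
    obtain ⟨t, ht, hGt⟩ := intermediate_value_Icc hT.le hGc.continuousOn hrIcc
    have htT : t < T := by
      rcases lt_or_eq_of_le ht.2 with h | h
      · exact h
      · exfalso; rw [h, hGT] at hGt; linarith
    refine ⟨t + T * (k : ℝ), ?_⟩
    have h1 : (t + T * (k : ℝ)) / T = t / T + (k : ℝ) := by field_simp
    have h2 : Int.fract (t / T + (k : ℝ)) = Int.fract (t / T) := Int.fract_add_intCast _ _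
    have h3 : Int.fract (t / T) = t / T :=
      Int.fract_eq_self.2 ⟨div_nonneg ht.1 hT.le, (div_lt_one hT).2 htT⟩
    have h4 : ⌊t / T + (k : ℝ)⌋ = k := by
      rw [Int.floor_add_intCast, Int.floor_eq_zero_iff.2 ⟨div_nonneg ht.1 hT.le, (div_lt_one hT).2 htT⟩]
      ring
    simp only [hH, hu, h1, h2, h3, h4, mul_div_cancel₀ _ hT.ne']
    rw [hGt, hr]; ring
  have hHcont : Continuous H :=
    (StrictMono.orderIsoOfSurjective H hHmono hHsurj).toHomeomorph.continuous
  exact ⟨H, hHcont, hHmono, hHper, hHeq⟩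

/-- If `f` is a continuous `2π`-periodic function with `f 0 = 0` such
that `f ∘ h₁ ∉ A(𝕋)` for every circle homeomorphism `h₁`, then — granted (i) the
affine invariance of `B(ℝ)` and (ii) the periodic-extension property — the function
`f₀` equal to `f` on `[0, 2π]` and `0` elsewhere is bounded and continuous and
satisfies `f₀ ∘ h ∉ B(ℝ)` for every self-homeomorphism `h` of `ℝ`. -/
theorem stmt_16 (f : ℝ → ℝ) (hfc : Continuous f)
    (hfper : Function.Periodic f (2 * π)) (hf0 : f 0 = 0)
    (hfA : ∀ H : ℝ → ℝ, IsCircleHomeoLift H →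
      ¬ MemWienerAlgebra (fun t => ((f (H t) : ℝ) : ℂ)))
    (hi : ∀ m : ℝ → ℂ, MemBR m → ∀ a b : ℝ, a ≠ 0 →
      MemBR (fun ξ => m (a * ξ + b)))
    (hii : ∀ m : ℝ → ℂ, MemBR m → ∀ c : ℝ,
      (∀ t, t ∉ Icc c (c + 2 * π) → m t = 0) →
      ∀ g : ℝ → ℂ, Function.Periodic g (2 * π) →
        (∀ t ∈ Ico c (c + 2 * π), g t = m t) → MemWienerAlgebra g)
    (f₀ : ℝ → ℝ) (hf₀ : ∀ t, f₀ t = if t ∈ Icc 0 (2 * π) then f t else 0) :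
    Continuous f₀ ∧ (∃ C : ℝ, ∀ t, |f₀ t| ≤ C) ∧
      ∀ h : Homeomorph ℝ ℝ, ¬ MemBR (fun t => ((f₀ (h t) : ℝ) : ℂ)) := by
  have hT : (0:ℝ) < 2 * π := by positivity
  have hf2π : f (2 * π) = 0 := by
    have := hfper 0
    rw [zero_add] at this
    rw [this, hf0]
  have hf₀eq : f₀ = fun t => if t ∈ Icc 0 (2 * π) then f t else 0 := funext hf₀
  have hcont : Continuous f₀ := by
    rw [hf₀eq]
    refine Continuous.if ?_ hfc continuous_const
    intro a ha
    have hfr : frontier {x : ℝ | x ∈ Icc 0 (2 * π)} = {0, 2 * π} := by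
      show frontier (Icc (0:ℝ) (2 * π)) = _
      rw [frontier_Icc hT.le]
    rw [hfr] at ha
    rcases ha with rfl | rfl
    · exact hf0
    · exact hf2π
  refine ⟨hcont, ?_, ?_⟩
  · obtain ⟨C, hC⟩ := (isCompact_Icc (a := (0:ℝ)) (b := 2 * π)).exists_bound_of_continuousOn
      hfc.continuousOn
    refine ⟨max C 0, fun t => ?_⟩
    rw [hf₀]
    split_ifs with ht
    · exact le_max_of_le_left (hC t ht)
    · simp
  · intro h hmem
    -- get an affine reparametrization G of h fixing 0 and 2π, strictly increasing
    have hkey : ∃ α β : ℝ, α ≠ 0 ∧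
        StrictMono (fun t => h (α * t + β)) ∧ h (α * 0 + β) = 0 ∧
        h (α * (2 * π) + β) = 2 * π := by
      rcases Continuous.strictMono_of_inj h.continuous h.injective with hmono | hanti
      · set a := h.symm 0 with ha
        set b := h.symm (2 * π) with hb
        have hha : h a = 0 := h.apply_symm_apply 0
        have hhb : h b = 2 * π := h.apply_symm_apply (2 * π)
        have hab : a < b := by
          rw [← hmono.lt_iff_lt, hha, hhb]; exact hT
        have hba : (0:ℝ) < b - a := sub_pos.2 hab
        refine ⟨(b - a) / (2 * π), a, ne_of_gt (div_pos hba hT), ?_, ?_, ?_⟩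
        · intro s t hst
          apply hmono
          have : (b - a) / (2 * π) * s < (b - a) / (2 * π) * t :=
            mul_lt_mul_of_pos_left hst (div_pos hba hT)
          linarith
        · rw [mul_zero, zero_add, hha]
        · have hcanc : b - a + a = b := by ring
          rw [div_mul_cancel₀ _ hT.ne', hcanc, hhb]
      · set a := h.symm (2 * π) with ha
        set b := h.symm 0 with hb
        have hha : h a = 2 * π := h.apply_symm_apply (2 * π)
        have hhb : h b = 0 := h.apply_symm_apply 0
        have hab : a < b := by
          rw [← StrictAnti.lt_iff_gt hanti, hha, hhb]; exact hT
        have hαneg : (a - b) / (2 * π) < 0 := by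
          apply div_neg_of_neg_of_pos _ hT
          linarith
        refine ⟨(a - b) / (2 * π), b, ne_of_lt hαneg, ?_, ?_, ?_⟩
        · intro s t hst
          apply hanti
          have : (a - b) / (2 * π) * t < (a - b) / (2 * π) * s :=
            mul_lt_mul_of_neg_left hst hαneg
          linarith
        · rw [mul_zero, zero_add, hhb]
        · have hcanc : a - b + b = a := by ring
          rw [div_mul_cancel₀ _ hT.ne', hcanc, hha]
    obtain ⟨α, β, hα, hGm, hG0, hGT⟩ := hkey
    set G : ℝ → ℝ := fun t => h (α * t + β) with hG
    have hGc : Continuous G := h.continuous.comp ((continuous_const.mul continuous_id).add continuous_const)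
    rw [mul_zero, zero_add] at hG0
    obtain ⟨H, hHc, hHm, hHper, hHeq⟩ := circle_lift_of_monotone G hGc hGm
      (by rw [hG]; simpa using hG0) (by rw [hG]; exact hGT)
    -- membership of the compressed function
    set m : ℝ → ℂ := fun ξ => ((f₀ (h (α * ξ + β)) : ℝ) : ℂ) with hm
    have hmBR : MemBR m := hi _ hmem α β hα
    have hGbounds : ∀ t, (t < 0 → G t < 0) ∧ (2 * π < t → 2 * π < G t) := by
      intro t
      constructor
      · intro ht
        have := hGm ht
        rw [hG] at this
        simpa [hG0] using this
      · intro ht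
        have := hGm ht
        rw [← hGT]
        simpa [hG] using this
    have hvanish : ∀ t, t ∉ Icc 0 (0 + 2 * π) → m t = 0 := by
      intro t ht
      rw [zero_add, mem_Icc, not_and_or] at ht
      have hGt : G t ∉ Icc 0 (2 * π) := by
        rcases ht with ht | ht
        · push_neg at ht
          have := (hGbounds t).1 ht
          intro hc; exact absurd hc.1 (not_le.2 this)
        · push_neg at ht
          have := (hGbounds t).2 ht
          intro hc; exact absurd hc.2 (not_le.2 this)
      rw [hm]
      have : f₀ (G t) = 0 := by rw [hf₀, if_neg hGt]
      rw [hG] at this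
      simp [this]
    set g : ℝ → ℂ := fun t => ((f (H t) : ℝ) : ℂ) with hg
    have hgper : Function.Periodic g (2 * π) := by
      intro t
      simp only [hg, hHper t, hfper (H t)]
    have hG0' : G 0 = 0 := by show h (α * 0 + β) = 0; rw [mul_zero, zero_add]; exact hG0
    have hGT' : G (2 * π) = 2 * π := hGT
    have hagree : ∀ t ∈ Ico 0 (0 + 2 * π), g t = m t := by
      intro t ht
      rw [zero_add] at ht
      have hGmem : G t ∈ Icc 0 (2 * π) := by
        constructor
        · have := hGm.monotone ht.1; rwa [hG0'] at this
        · have := hGm.monotone ht.2.le; rwa [hGT'] at this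
      have h1 : f₀ (G t) = f (G t) := by rw [hf₀, if_pos hGmem]
      show ((f (H t) : ℝ) : ℂ) = ((f₀ (h (α * t + β)) : ℝ) : ℂ)
      rw [hHeq t ht]
      show ((f (G t) : ℝ) : ℂ) = ((f₀ (G t) : ℝ) : ℂ)
      rw [h1]
    have hWA : MemWienerAlgebra g := hii m hmBR 0 hvanish g hgper hagree
    exact hfA H ⟨hHc, Or.inl ⟨hHm, hHper⟩⟩ hWA
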